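/- In the real-valued one-step BDAR(1) setup, E[Z1·Z2] = φ12·E[Z1p·Z2p] + (φ1 − φ12)·E[Z1p]·E[ε2] + (φ2 − φ12)·E[ε1]·E[Z2p] + (1 − φ1 − φ2 + φ12)·E[ε1·ε2]. -/

import Mathlib

open MeasureTheory ProbabilityTheory

lemma bdar1_integrable_of_bdd {Ω : Type*} [MeasurableSpace Ω] {P : Measure Ω}
    [IsFiniteMeasure P] {f : Ω → ℝ} (hm : Measurable f) (hb : ∃ C, ∀ ω, |f ω| ≤ C) :
    Integrable f P := by
  obtain ⟨C, hC⟩ := hb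
  exact (integrable_const C).mono' hm.aestronglyMeasurable
    (Filter.Eventually.of_forall fun ω => by simpa [Real.norm_eq_abs] using hC ω)

/-- **Cross-moment identity of the real-valued one-step BDAR(1) setup.**
`E[Z1·Z2] = φ12·E[Z1p·Z2p] + (φ1 - φ12)·E[Z1p]·E[ε2] + (φ2 - φ12)·E[ε1]·E[Z2p]
  + (1 - φ1 - φ2 + φ12)·E[ε1·ε2]`. -/
theorem bdar1_cross_moment
    {Ω : Type*} [MeasurableSpace Ω] (P : Measure Ω) [IsProbabilityMeasure P]
    (Z1p Z2p ε1 ε2 : Ω → ℝ) (α : Ω → Bool × Bool)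
    (hZ1pm : Measurable Z1p) (hZ2pm : Measurable Z2p)
    (hε1m : Measurable ε1) (hε2m : Measurable ε2) (hαm : Measurable α)
    (hZ1pb : ∃ C, ∀ ω, |Z1p ω| ≤ C) (hZ2pb : ∃ C, ∀ ω, |Z2p ω| ≤ C)
    (hε1b : ∃ C, ∀ ω, |ε1 ω| ≤ C) (hε2b : ∃ C, ∀ ω, |ε2 ω| ≤ C)
    -- α is independent of the quadruple (Z1p, Z2p, ε1, ε2)
    (hα : IndepFun α (fun ω => (Z1p ω, Z2p ω, ε1 ω, ε2 ω)) P)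
    -- (ε1, ε2) is independent of (Z1p, Z2p)
    (hε : IndepFun (fun ω => (ε1 ω, ε2 ω)) (fun ω => (Z1p ω, Z2p ω)) P)
    (Z1 Z2 : Ω → ℝ)
    (hZ1 : ∀ ω, Z1 ω = if (α ω).1 then Z1p ω else ε1 ω)
    (hZ2 : ∀ ω, Z2 ω = if (α ω).2 then Z2p ω else ε2 ω)
    (φ1 φ2 φ12 : ℝ)
    (hφ1 : φ1 = (P {ω | (α ω).1 = true}).toReal)
    (hφ2 : φ2 = (P {ω | (α ω).2 = true}).toReal)
    (hφ12 : φ12 = (P {ω | α ω = (true, true)}).toReal) :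
    ∫ ω, Z1 ω * Z2 ω ∂P
      = φ12 * ∫ ω, Z1p ω * Z2p ω ∂P
        + (φ1 - φ12) * (∫ ω, Z1p ω ∂P) * (∫ ω, ε2 ω ∂P)
        + (φ2 - φ12) * (∫ ω, ε1 ω ∂P) * (∫ ω, Z2p ω ∂P)
        + (1 - φ1 - φ2 + φ12) * ∫ ω, ε1 ω * ε2 ω ∂P := by
  obtain ⟨C1, hC1⟩ := hZ1pb
  obtain ⟨C2, hC2⟩ := hZ2pb
  obtain ⟨D1, hD1⟩ := hε1b
  obtain ⟨D2, hD2⟩ := hε2b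
  set W : Ω → ℝ × ℝ × ℝ × ℝ := fun ω => (Z1p ω, Z2p ω, ε1 ω, ε2 ω) with hWdef
  have hWm : Measurable W := hZ1pm.prodMk (hZ2pm.prodMk (hε1m.prodMk hε2m))
  -- key: expectation of indicator(α = b) times a function of the quadruple factorizes
  have key : ∀ (b : Bool × Bool) (g : ℝ × ℝ × ℝ × ℝ → ℝ), Measurable g →
      (∃ C, ∀ ω, |g (W ω)| ≤ C) →
      ∫ ω, (if α ω = b then (1:ℝ) else 0) * g (W ω) ∂P
        = (P {ω | α ω = b}).toReal * ∫ ω, g (W ω) ∂P := by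
    intro b g hg hgb
    have hgBool : Measurable (fun p : Bool × Bool => if p = b then (1:ℝ) else 0) :=
      measurable_of_countable _
    have hind : IndepFun (fun ω => if α ω = b then (1:ℝ) else 0) (fun ω => g (W ω)) P :=
      hα.comp hgBool hg
    have h1 : Integrable (fun ω => if α ω = b then (1:ℝ) else 0) P :=
      bdar1_integrable_of_bdd (hgBool.comp hαm)
        ⟨1, fun ω => by by_cases h : α ω = b <;> simp [h]⟩
    have h2 : Integrable (fun ω => g (W ω)) P := bdar1_integrable_of_bdd (hg.comp hWm) hgb
    have hmul := hind.integral_mul_eq_mul_integral h1.aestronglyMeasurable h2.aestronglyMeasurable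
    rw [show ((fun ω => if α ω = b then (1:ℝ) else 0) * fun ω => g (W ω))
      = fun ω => (if α ω = b then (1:ℝ) else 0) * g (W ω) from rfl] at hmul
    rw [hmul]
    congr 1
    have hset : MeasurableSet {ω | α ω = b} := hαm (measurableSet_singleton b)
    have : (fun ω => if α ω = b then (1:ℝ) else 0)
        = Set.indicator {ω | α ω = b} (fun _ => (1:ℝ)) := by
      funext ω; by_cases h : α ω = b <;> simp [Set.indicator_apply, h]
    rw [this]
    rw [integral_indicator_const (1:ℝ) hset]
    simp [Measure.real]
  -- pointwise decomposition
  have hpt : ∀ ω, Z1 ω * Z2 ω =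
      (if α ω = (true, true) then (1:ℝ) else 0) * (Z1p ω * Z2p ω)
      + (if α ω = (true, false) then (1:ℝ) else 0) * (Z1p ω * ε2 ω)
      + (if α ω = (false, true) then (1:ℝ) else 0) * (ε1 ω * Z2p ω)
      + (if α ω = (false, false) then (1:ℝ) else 0) * (ε1 ω * ε2 ω) := by
    intro ω
    rw [hZ1 ω, hZ2 ω]
    rcases h1 : (α ω).1 <;> rcases h2 : (α ω).2 <;>
      simp [Prod.ext_iff, h1, h2]
  -- integrability of each term
  have hInd : ∀ b : Bool × Bool, Measurable (fun ω => if α ω = b then (1:ℝ) else 0) :=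
    fun b => (measurable_of_countable (fun p : Bool × Bool => if p = b then (1:ℝ) else 0)).comp hαm
  have hIndBd : ∀ (b : Bool × Bool) ω, |(if α ω = b then (1:ℝ) else 0)| ≤ 1 := by
    intro b ω; by_cases h : α ω = b <;> simp [h]
  have hint : ∀ (b : Bool × Bool) (u v : Ω → ℝ), Measurable u → Measurable v →
      (∀ ω, |u ω| ≤ C1 ⊔ C2 ⊔ D1 ⊔ D2) → (∀ ω, |v ω| ≤ C1 ⊔ C2 ⊔ D1 ⊔ D2) →
      Integrable (fun ω => (if α ω = b then (1:ℝ) else 0) * (u ω * v ω)) P := by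
    intro b u v hu hv hub hvb
    refine bdar1_integrable_of_bdd ((hInd b).mul (hu.mul hv))
      ⟨(C1 ⊔ C2 ⊔ D1 ⊔ D2) * (C1 ⊔ C2 ⊔ D1 ⊔ D2), fun ω => ?_⟩
    have h0 : (0:ℝ) ≤ C1 ⊔ C2 ⊔ D1 ⊔ D2 := le_trans (abs_nonneg _) (hub ω)
    calc |(if α ω = b then (1:ℝ) else 0) * (u ω * v ω)|
        ≤ 1 * |u ω * v ω| := by
          rw [abs_mul]; exact mul_le_mul_of_nonneg_right (hIndBd b ω) (abs_nonneg _)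
      _ = |u ω| * |v ω| := by rw [one_mul, abs_mul]
      _ ≤ (C1 ⊔ C2 ⊔ D1 ⊔ D2) * (C1 ⊔ C2 ⊔ D1 ⊔ D2) :=
          mul_le_mul (hub ω) (hvb ω) (abs_nonneg _) h0
  have hZ1pb' : ∀ ω, |Z1p ω| ≤ C1 ⊔ C2 ⊔ D1 ⊔ D2 := fun ω =>
    (hC1 ω).trans (by simp [le_sup_iff])
  have hZ2pb' : ∀ ω, |Z2p ω| ≤ C1 ⊔ C2 ⊔ D1 ⊔ D2 := fun ω =>
    (hC2 ω).trans (by simp [le_sup_iff])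
  have hε1b' : ∀ ω, |ε1 ω| ≤ C1 ⊔ C2 ⊔ D1 ⊔ D2 := fun ω =>
    (hD1 ω).trans (by simp [le_sup_iff])
  have hε2b' : ∀ ω, |ε2 ω| ≤ C1 ⊔ C2 ⊔ D1 ⊔ D2 := fun ω =>
    (hD2 ω).trans (by simp [le_sup_iff])
  have i1 := hint (true, true) Z1p Z2p hZ1pm hZ2pm hZ1pb' hZ2pb'
  have i2 := hint (true, false) Z1p ε2 hZ1pm hε2m hZ1pb' hε2b'
  have i3 := hint (false, true) ε1 Z2p hε1m hZ2pm hε1b' hZ2pb'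
  have i4 := hint (false, false) ε1 ε2 hε1m hε2m hε1b' hε2b'
  -- split the integral
  have hsplit : ∫ ω, Z1 ω * Z2 ω ∂P =
      (∫ ω, (if α ω = (true, true) then (1:ℝ) else 0) * (Z1p ω * Z2p ω) ∂P)
      + (∫ ω, (if α ω = (true, false) then (1:ℝ) else 0) * (Z1p ω * ε2 ω) ∂P)
      + (∫ ω, (if α ω = (false, true) then (1:ℝ) else 0) * (ε1 ω * Z2p ω) ∂P)
      + (∫ ω, (if α ω = (false, false) then (1:ℝ) else 0) * (ε1 ω * ε2 ω) ∂P) := by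
    rw [show (fun ω => Z1 ω * Z2 ω) = fun ω =>
      (if α ω = (true, true) then (1:ℝ) else 0) * (Z1p ω * Z2p ω)
      + (if α ω = (true, false) then (1:ℝ) else 0) * (Z1p ω * ε2 ω)
      + (if α ω = (false, true) then (1:ℝ) else 0) * (ε1 ω * Z2p ω)
      + (if α ω = (false, false) then (1:ℝ) else 0) * (ε1 ω * ε2 ω) from funext hpt]
    have h4 := integral_add ((i1.add i2).add i3) i4
    have h3 := integral_add (i1.add i2) i3
    have h2' := integral_add i1 i2
    simp only [Pi.add_apply] at h4 h3 h2'
    rw [h4, h3, h2']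
  -- apply key to each term
  have k1 := key (true, true) (fun p => p.1 * p.2.1)
    (measurable_fst.mul (measurable_snd.fst)) ⟨C1 * C2, fun ω => by
      simp only [hWdef, abs_mul]
      exact mul_le_mul (hC1 ω) (hC2 ω) (abs_nonneg _) (le_trans (abs_nonneg _) (hC1 ω))⟩
  have k2 := key (true, false) (fun p => p.1 * p.2.2.2)
    (measurable_fst.mul (measurable_snd.snd.snd)) ⟨C1 * D2, fun ω => by
      simp only [hWdef, abs_mul]
      exact mul_le_mul (hC1 ω) (hD2 ω) (abs_nonneg _) (le_trans (abs_nonneg _) (hC1 ω))⟩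
  have k3 := key (false, true) (fun p => p.2.2.1 * p.2.1)
    (measurable_snd.snd.fst.mul (measurable_snd.fst)) ⟨D1 * C2, fun ω => by
      simp only [hWdef, abs_mul]
      exact mul_le_mul (hD1 ω) (hC2 ω) (abs_nonneg _) (le_trans (abs_nonneg _) (hD1 ω))⟩
  have k4 := key (false, false) (fun p => p.2.2.1 * p.2.2.2)
    (measurable_snd.snd.fst.mul (measurable_snd.snd.snd)) ⟨D1 * D2, fun ω => by
      simp only [hWdef, abs_mul]
      exact mul_le_mul (hD1 ω) (hD2 ω) (abs_nonneg _) (le_trans (abs_nonneg _) (hD1 ω))⟩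
  simp only [hWdef] at k1 k2 k3 k4
  rw [hsplit, k1, k2, k3, k4]
  -- probabilities of the four atoms
  set ptt := (P {ω | α ω = (true, true)}).toReal with hptt
  set ptf := (P {ω | α ω = (true, false)}).toReal with hptf
  set pft := (P {ω | α ω = (false, true)}).toReal with hpft
  set pff := (P {ω | α ω = (false, false)}).toReal with hpff
  have hm_tt : MeasurableSet {ω | α ω = (true, true)} := hαm (measurableSet_singleton _)
  have hm_tf : MeasurableSet {ω | α ω = (true, false)} := hαm (measurableSet_singleton _)
  have hm_ft : MeasurableSet {ω | α ω = (false, true)} := hαm (measurableSet_singleton _)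
  have hm_ff : MeasurableSet {ω | α ω = (false, false)} := hαm (measurableSet_singleton _)
  have hu1 : {ω | (α ω).1 = true} = {ω | α ω = (true, true)} ∪ {ω | α ω = (true, false)} := by
    ext ω
    rcases h1 : (α ω).1 <;> rcases h2 : (α ω).2 <;>
      simp [Prod.ext_iff, h1, h2]
  have hu2 : {ω | (α ω).2 = true} = {ω | α ω = (true, true)} ∪ {ω | α ω = (false, true)} := by
    ext ω
    rcases h1 : (α ω).1 <;> rcases h2 : (α ω).2 <;>
      simp [Prod.ext_iff, h1, h2]
  have hd1 : Disjoint {ω | α ω = (true, true)} {ω | α ω = (true, false)} := by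
    rw [Set.disjoint_left]; intro ω h1 h2
    simp only [Set.mem_setOf_eq] at h1 h2; rw [h1] at h2; exact absurd h2 (by simp)
  have hd2 : Disjoint {ω | α ω = (true, true)} {ω | α ω = (false, true)} := by
    rw [Set.disjoint_left]; intro ω h1 h2
    simp only [Set.mem_setOf_eq] at h1 h2; rw [h1] at h2; exact absurd h2 (by simp)
  have hφ1' : φ1 = ptt + ptf := by
    rw [hφ1, hu1, measure_union hd1 hm_tf,
      ENNReal.toReal_add (measure_ne_top P _) (measure_ne_top P _)]
  have hφ2' : φ2 = ptt + pft := by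
    rw [hφ2, hu2, measure_union hd2 hm_ft,
      ENNReal.toReal_add (measure_ne_top P _) (measure_ne_top P _)]
  have htot : ptt + ptf + pft + pff = 1 := by
    have huniv : (Set.univ : Set Ω) = {ω | α ω = (true, true)} ∪ ({ω | α ω = (true, false)}
        ∪ ({ω | α ω = (false, true)} ∪ {ω | α ω = (false, false)})) := by
      ext ω
      rcases h1 : (α ω).1 <;> rcases h2 : (α ω).2 <;>
        simp [Prod.ext_iff, h1, h2]
    have hdisj : ∀ (b c : Bool × Bool), b ≠ c →
        Disjoint {ω | α ω = b} {ω | α ω = c} := by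
      intro b c hbc
      rw [Set.disjoint_left]; intro ω h1 h2
      simp only [Set.mem_setOf_eq] at h1 h2; exact hbc (h1 ▸ h2)
    have := measure_univ (μ := P)
    rw [huniv, measure_union (by
        refine Set.disjoint_union_right.mpr ⟨?_, Set.disjoint_union_right.mpr ⟨?_, ?_⟩⟩ <;>
          exact hdisj _ _ (by simp)) (hm_tf.union (hm_ft.union hm_ff)),
      measure_union (by
        refine Set.disjoint_union_right.mpr ⟨?_, ?_⟩ <;> exact hdisj _ _ (by simp))
        (hm_ft.union hm_ff),
      measure_union (hdisj _ _ (by simp)) hm_ff] at this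
    have := congrArg ENNReal.toReal this
    rw [ENNReal.toReal_add (measure_ne_top P _) (by
        exact ENNReal.add_ne_top.mpr ⟨measure_ne_top P _,
          ENNReal.add_ne_top.mpr ⟨measure_ne_top P _, measure_ne_top P _⟩⟩),
      ENNReal.toReal_add (measure_ne_top P _) (ENNReal.add_ne_top.mpr
        ⟨measure_ne_top P _, measure_ne_top P _⟩),
      ENNReal.toReal_add (measure_ne_top P _) (measure_ne_top P _)] at this
    simp only [ENNReal.toReal_one] at this
    rw [← hptt, ← hptf, ← hpft, ← hpff] at this
    linarith
  -- cross expectations factorize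
  have hcross1 : ∫ ω, Z1p ω * ε2 ω ∂P = (∫ ω, Z1p ω ∂P) * ∫ ω, ε2 ω ∂P := by
    have h : IndepFun Z1p ε2 P :=
      (hε.comp (measurable_snd : Measurable (Prod.snd : ℝ × ℝ → ℝ)) measurable_fst).symm
    have := h.integral_mul_eq_mul_integral
      (bdar1_integrable_of_bdd hZ1pm ⟨C1, hC1⟩).aestronglyMeasurable (bdar1_integrable_of_bdd hε2m ⟨D2, hD2⟩).aestronglyMeasurable
    simpa [Pi.mul_apply] using this
  have hcross2 : ∫ ω, ε1 ω * Z2p ω ∂P = (∫ ω, ε1 ω ∂P) * ∫ ω, Z2p ω ∂P := by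
    have h : IndepFun ε1 Z2p P :=
      hε.comp (measurable_fst : Measurable (Prod.fst : ℝ × ℝ → ℝ)) measurable_snd
    have := h.integral_mul_eq_mul_integral
      (bdar1_integrable_of_bdd hε1m ⟨D1, hD1⟩).aestronglyMeasurable (bdar1_integrable_of_bdd hZ2pm ⟨C2, hC2⟩).aestronglyMeasurable
    simpa [Pi.mul_apply] using this
  rw [hcross1, hcross2]
  have e1 : ptt = φ12 := hφ12.symm
  have e2 : ptf = φ1 - φ12 := by rw [hφ1', e1]; ring
  have e3 : pft = φ2 - φ12 := by rw [hφ2', e1]; ring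
  have e4 : pff = 1 - φ1 - φ2 + φ12 := by
    have := htot; rw [e1, e2, e3] at this; linarith
  rw [e1, e2, e3, e4]
  ring
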